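/- Let A ∈ ℝ^{m×n}, b ∈ ℝ^m, p,q ∈ (0,1], let Â and b̂ be the Bernoulli(p)- and Bernoulli(q)-masked versions of A and b, let {I_i}_{i=1}^s partition the rows and {J_j}_{j=1}^t partition the columns, and let (I,J) be a uniformly chosen pair (probability 1/(st)), independent of the masks. Define g(x) = I_{:,J}(Â_{I,J})^T ( Â_{I,:} x / p² − b̂_I / (pq) ) − ((1−p)/p²) diag( I_{:,J}(Â_{I,J})^T Â_{I,:} ) x. Then for every fixed x ∈ ℝ^n, E[g(x)] = (1/(st)) A^T (A x − b), i.e., g(x) is an unbiased estimator of the gradient of f(x) = (1/(2st))‖Ax − b‖₂². -/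

import Mathlib

open Matrix BigOperators Finset Filter

noncomputable section

/-- Entrywise Bernoulli mask of a matrix. -/
def maskM {m n : ℕ} (δ : Fin m → Fin n → Bool) (A : Matrix (Fin m) (Fin n) ℝ) :
    Matrix (Fin m) (Fin n) ℝ := Matrix.of fun i j => if δ i j then A i j else 0

/-- Entrywise Bernoulli mask of a vector. -/
def maskV {m : ℕ} (ε : Fin m → Bool) (b : Fin m → ℝ) : Fin m → ℝ :=
  fun i => if ε i then b i else 0

/-- Probability of a given mask realization: i.i.d. Bernoulli(p) entries. -/
def wM {m n : ℕ} (p : ℝ) (δ : Fin m → Fin n → Bool) : ℝ :=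
  ∏ i, ∏ j, (if δ i j then p else 1 - p)

/-- Probability of a given vector-mask realization: i.i.d. Bernoulli(q) entries. -/
def wV {m : ℕ} (q : ℝ) (ε : Fin m → Bool) : ℝ :=
  ∏ i, (if ε i then q else 1 - q)

/-- `dsel K = I_{:,K} (I_{:,K})ᵀ`, the 0/1 diagonal selection matrix of an index set. -/
def dsel {k : ℕ} (K : Finset (Fin k)) : Matrix (Fin k) (Fin k) ℝ :=
  Matrix.diagonal fun i => if i ∈ K then (1 : ℝ) else 0

/-- `diagPart M` keeps only the diagonal of the square matrix `M`. -/
def diagPart {k : ℕ} (M : Matrix (Fin k) (Fin k) ℝ) : Matrix (Fin k) (Fin k) ℝ :=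
  Matrix.diagonal fun i => M i i

/-- Squared Euclidean norm. -/
def sqnorm {k : ℕ} (v : Fin k → ℝ) : ℝ := ∑ i, (v i) ^ 2

/-- Squared Frobenius norm. -/
def frobSq {m n : ℕ} (A : Matrix (Fin m) (Fin n) ℝ) : ℝ := ∑ i, ∑ j, (A i j) ^ 2

/-- `P` is a partition of the index set into nonempty pairwise disjoint blocks. -/
def IsPartition {k s : ℕ} (P : Fin s → Finset (Fin k)) : Prop :=
  (∀ i : Fin k, ∃! a : Fin s, i ∈ P a) ∧ ∀ a : Fin s, (P a).Nonempty


lemma sum_prod_pi {ι β : Type*} [Fintype ι] [DecidableEq ι] [Fintype β]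
    (W : ι → β → ℝ) :
    ∑ g : ι → β, ∏ i, W i (g i) = ∏ i, ∑ b, W i b :=
  (Fintype.prod_sum W).symm

lemma sum_pi_mul {ι β : Type*} [Fintype ι] [DecidableEq ι] [Fintype β]
    (W : ι → β → ℝ) (hW : ∀ i, ∑ b, W i b = 1) (r : ι) (f : β → ℝ) :
    ∑ g : ι → β, (∏ i, W i (g i)) * f (g r) = ∑ b, W r b * f b := by
  have h1 : ∀ g : ι → β, (∏ i, W i (g i)) * f (g r)
      = ∏ i, (W i (g i) * (if i = r then f (g i) else 1)) := by
    intro g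
    rw [Finset.prod_mul_distrib, Finset.prod_ite_eq' Finset.univ r (fun i => f (g i))]
    simp
  simp only [h1]
  rw [sum_prod_pi (fun i b => W i b * (if i = r then f b else 1))]
  have h2 : ∀ i : ι, (∑ b, W i b * (if i = r then f b else 1))
      = if i = r then (∑ b, W r b * f b) else 1 := by
    intro i
    by_cases h : i = r
    · subst h; simp
    · simp [h, hW i]
  simp only [h2]
  rw [Finset.prod_ite_eq' Finset.univ r (fun _ => ∑ b, W r b * f b)]
  simp

lemma sum_pi_mul2 {ι β : Type*} [Fintype ι] [DecidableEq ι] [Fintype β]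
    (W : ι → β → ℝ) (hW : ∀ i, ∑ b, W i b = 1) (r r' : ι) (hrr : r ≠ r')
    (f f' : β → ℝ) :
    ∑ g : ι → β, (∏ i, W i (g i)) * (f (g r) * f' (g r'))
      = (∑ b, W r b * f b) * (∑ b, W r' b * f' b) := by
  have h1 : ∀ g : ι → β, (∏ i, W i (g i)) * (f (g r) * f' (g r'))
      = ∏ i, (W i (g i) * ((if i = r then f (g i) else 1) * (if i = r' then f' (g i) else 1))) := by
    intro g
    rw [Finset.prod_mul_distrib, Finset.prod_mul_distrib,
      Finset.prod_ite_eq' Finset.univ r (fun i => f (g i)),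
      Finset.prod_ite_eq' Finset.univ r' (fun i => f' (g i))]
    simp
  simp only [h1]
  rw [sum_prod_pi (fun i b => W i b * ((if i = r then f b else 1) * (if i = r' then f' b else 1)))]
  have h2 : ∀ i : ι, (∑ b, W i b * ((if i = r then f b else 1) * (if i = r' then f' b else 1)))
      = (if i = r then (∑ b, W r b * f b) else 1) * (if i = r' then (∑ b, W r' b * f' b) else 1) := by
    intro i
    by_cases h : i = r
    · subst h; simp [hrr, hW]
    · by_cases h' : i = r'
      · subst h'; simp [h, hW]
      · simp [h, h', hW i]
  simp only [h2]
  rw [Finset.prod_mul_distrib, Finset.prod_ite_eq' Finset.univ r, Finset.prod_ite_eq' Finset.univ r']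
  simp

lemma bw_sum (p : ℝ) : ∑ b : Bool, (if b then p else 1 - p) = 1 := by
  simp [Fintype.sum_bool]

lemma wV_total {k : ℕ} (q : ℝ) : ∑ ε : Fin k → Bool, wV q ε = 1 := by
  unfold wV
  rw [sum_prod_pi (fun (_ : Fin k) (b : Bool) => if b then q else 1 - q)]
  simp [bw_sum]

lemma EV1 {k : ℕ} (q : ℝ) (r : Fin k) (f : Bool → ℝ) :
    ∑ ε : Fin k → Bool, wV q ε * f (ε r) = q * f true + (1 - q) * f false := by
  unfold wV
  rw [sum_pi_mul (fun (_ : Fin k) (b : Bool) => if b then q else 1 - q)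
    (fun _ => bw_sum q) r f]
  simp [Fintype.sum_bool]

lemma EV2 {k : ℕ} (q : ℝ) (r r' : Fin k) (h : r ≠ r') (f f' : Bool → ℝ) :
    ∑ ε : Fin k → Bool, wV q ε * (f (ε r) * f' (ε r'))
      = (q * f true + (1 - q) * f false) * (q * f' true + (1 - q) * f' false) := by
  unfold wV
  rw [sum_pi_mul2 (fun (_ : Fin k) (b : Bool) => if b then q else 1 - q)
    (fun _ => bw_sum q) r r' h f f']
  simp [Fintype.sum_bool]

lemma EMrow {m n : ℕ} (p : ℝ) (r : Fin m) (g : (Fin n → Bool) → ℝ) :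
    ∑ δ : Fin m → Fin n → Bool, wM p δ * g (δ r) = ∑ σ : Fin n → Bool, wV p σ * g σ := by
  unfold wM
  rw [sum_pi_mul (fun (_ : Fin m) (σ : Fin n → Bool) => ∏ j, if σ j then p else 1 - p)
    (fun _ => wV_total p) r g]
  rfl

lemma Erow {m n : ℕ} (A : Matrix (Fin m) (Fin n) ℝ) (b : Fin m → ℝ) (x : Fin n → ℝ)
    (p q : ℝ) (hp : p ≠ 0) (hq : q ≠ 0) (r : Fin m) (k : Fin n) :
    ∑ δ : Fin m → Fin n → Bool, ∑ ε : Fin m → Bool, (wM p δ * wV q ε) *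
      (maskM δ A r k * ((1 / p ^ 2) * (∑ l, maskM δ A r l * x l)
          - (1 / (p * q)) * maskV ε b r)
        - ((1 - p) / p ^ 2) * (maskM δ A r k * maskM δ A r k) * x k)
    = A r k * ((∑ l, A r l * x l) - b r) := by
  -- abbreviations for the masked row
  set a : (Fin n → Bool) → Fin n → ℝ := fun σ l => if σ l then A r l else 0 with ha
  -- Step 1: integrate out ε
  have hstep1 : ∀ δ : Fin m → Fin n → Bool,
      ∑ ε : Fin m → Bool, (wM p δ * wV q ε) *
        (maskM δ A r k * ((1 / p ^ 2) * (∑ l, maskM δ A r l * x l)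
            - (1 / (p * q)) * maskV ε b r)
          - ((1 - p) / p ^ 2) * (maskM δ A r k * maskM δ A r k) * x k)
      = wM p δ *
        (maskM δ A r k * ((1 / p ^ 2) * (∑ l, maskM δ A r l * x l))
          - (b r / p) * maskM δ A r k
          - ((1 - p) / p ^ 2) * (maskM δ A r k * maskM δ A r k) * x k) := by
    intro δ
    set U : ℝ := maskM δ A r k * ((1 / p ^ 2) * (∑ l, maskM δ A r l * x l))
      - ((1 - p) / p ^ 2) * (maskM δ A r k * maskM δ A r k) * x k with hU
    set V : ℝ := maskM δ A r k * (1 / (p * q)) with hV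
    have hpt : ∀ ε : Fin m → Bool,
        (wM p δ * wV q ε) *
          (maskM δ A r k * ((1 / p ^ 2) * (∑ l, maskM δ A r l * x l)
              - (1 / (p * q)) * maskV ε b r)
            - ((1 - p) / p ^ 2) * (maskM δ A r k * maskM δ A r k) * x k)
        = wM p δ * (wV q ε * U - V * (wV q ε * maskV ε b r)) := by
      intro ε; rw [hU, hV]; ring
    simp only [hpt]
    rw [← Finset.mul_sum, Finset.sum_sub_distrib, ← Finset.mul_sum, ← Finset.sum_mul]
    have h1 : ∑ ε : Fin m → Bool, wV q ε * maskV ε b r = q * b r := by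
      have := EV1 (k := m) q r (fun c => if c then b r else 0)
      simpa [maskV] using this
    rw [h1, wV_total]
    congr 1
    rw [hU, hV]
    field_simp
    ring
  simp only [hstep1]
  -- Step 2: reduce the δ-sum to a single-row sum
  set G : (Fin n → Bool) → ℝ := fun σ =>
    (if σ k then A r k else 0) * ((1 / p ^ 2) * (∑ l, (if σ l then A r l else 0) * x l))
      - (b r / p) * (if σ k then A r k else 0)
      - ((1 - p) / p ^ 2) * ((if σ k then A r k else 0) * (if σ k then A r k else 0)) * x k
    with hG
  have hstep2 : (∑ δ : Fin m → Fin n → Bool, wM p δ *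
      (maskM δ A r k * ((1 / p ^ 2) * (∑ l, maskM δ A r l * x l))
        - (b r / p) * maskM δ A r k
        - ((1 - p) / p ^ 2) * (maskM δ A r k * maskM δ A r k) * x k))
      = ∑ σ : Fin n → Bool, wV p σ * G σ := EMrow p r G
  rw [hstep2]
  -- Step 3: compute the single-row expectation
  have hE1 : ∑ σ : Fin n → Bool, wV p σ * (if σ k then A r k else 0) = p * A r k := by
    have := EV1 (k := n) p k (fun c => if c then A r k else 0)
    simpa using this
  have hE11 : ∑ σ : Fin n → Bool,
      wV p σ * ((if σ k then A r k else 0) * (if σ k then A r k else 0))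
      = p * (A r k * A r k) := by
    have hc : ∀ σ : Fin n → Bool, (if σ k then A r k else 0) * (if σ k then A r k else 0)
        = (fun c => if c then A r k * A r k else 0) (σ k) := by
      intro σ; by_cases h : σ k <;> simp [h]
    simp only [hc]
    have := EV1 (k := n) p k (fun c => if c then A r k * A r k else 0)
    simpa using this
  have hE2 : ∀ l : Fin n, ∑ σ : Fin n → Bool,
      wV p σ * ((if σ k then A r k else 0) * (if σ l then A r l else 0))
      = p ^ 2 * (A r k * A r l) + (if l = k then (p - p ^ 2) * (A r k * A r k) else 0) := by
    intro l
    by_cases h : l = k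
    · subst h; rw [if_pos rfl, hE11]; ring
    · rw [if_neg h]
      have h2 := EV2 (k := n) p k l (fun e => h e.symm)
        (fun c => if c then A r k else 0) (fun c => if c then A r l else 0)
      rw [h2]
      norm_num
      ring
  have hpt2 : ∀ σ : Fin n → Bool, wV p σ * G σ
      = (1 / p ^ 2) * (∑ l, x l * (wV p σ * ((if σ k then A r k else 0) * (if σ l then A r l else 0))))
        - (b r / p) * (wV p σ * (if σ k then A r k else 0))
        - ((1 - p) / p ^ 2 * x k) * (wV p σ * ((if σ k then A r k else 0) * (if σ k then A r k else 0))) := by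
    intro σ
    have h0 : ∑ l, x l * (wV p σ * ((if σ k then A r k else 0) * (if σ l then A r l else 0)))
        = wV p σ * ((if σ k then A r k else 0) * ∑ l, (if σ l then A r l else 0) * x l) := by
      rw [Finset.mul_sum, Finset.mul_sum]
      exact Finset.sum_congr rfl fun l _ => by ring
    rw [h0, hG]
    ring
  simp only [hpt2]
  rw [Finset.sum_sub_distrib, Finset.sum_sub_distrib, ← Finset.mul_sum, ← Finset.mul_sum,
    ← Finset.mul_sum, Finset.sum_comm]
  have h3 : ∀ l : Fin n, ∑ σ : Fin n → Bool,
      x l * (wV p σ * ((if σ k then A r k else 0) * (if σ l then A r l else 0)))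
      = x l * (p ^ 2 * (A r k * A r l) + (if l = k then (p - p ^ 2) * (A r k * A r k) else 0)) := by
    intro l; rw [← Finset.mul_sum, hE2 l]
  simp only [h3]
  rw [hE1, hE11]
  have h4 : ∑ l : Fin n, x l * (p ^ 2 * (A r k * A r l)
      + (if l = k then (p - p ^ 2) * (A r k * A r k) else 0))
      = p ^ 2 * A r k * (∑ l, A r l * x l) + x k * ((p - p ^ 2) * (A r k * A r k)) := by
    simp only [mul_add]
    rw [Finset.sum_add_distrib]
    congr 1
    · rw [Finset.mul_sum]; exact Finset.sum_congr rfl fun l _ => by ring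
    · simp only [mul_ite, mul_zero]
      rw [Finset.sum_ite_eq' Finset.univ k (fun l => x l * ((p - p ^ 2) * (A r k * A r k)))]
      simp
  rw [h4]
  field_simp
  ring

lemma partition_sum {k s : ℕ} (P : Fin s → Finset (Fin k)) (hP : IsPartition P) (i : Fin k) :
    ∑ a : Fin s, (if i ∈ P a then (1 : ℝ) else 0) = 1 := by
  obtain ⟨a0, ha0, hu⟩ := hP.1 i
  have h1 : ∀ a : Fin s, (if i ∈ P a then (1 : ℝ) else 0) = if a = a0 then 1 else 0 := by
    intro a
    by_cases h : a = a0
    · subst h; simp [ha0]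
    · have hni : i ∉ P a := fun hi => h (hu a hi)
      simp [h, hni]
  simp only [h1]
  rw [Finset.sum_ite_eq' Finset.univ a0 (fun _ => (1 : ℝ))]
  simp

lemma comp {m n : ℕ} (K : Finset (Fin n)) (L : Finset (Fin m)) (M : Matrix (Fin m) (Fin n) ℝ)
    (u : Fin m → ℝ) (c0 : ℝ) (x : Fin n → ℝ) (k : Fin n) :
    ((dsel K * Mᵀ * dsel L) *ᵥ u - c0 • (diagPart (dsel K * Mᵀ * dsel L * M) *ᵥ x)) k
    = (if k ∈ K then (1 : ℝ) else 0) *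
        ∑ r, (if r ∈ L then (1 : ℝ) else 0) * (M r k * u r - c0 * (M r k * M r k) * x k) := by
  have hKL : ∀ r : Fin m, (dsel K * Mᵀ * dsel L) k r
      = (if k ∈ K then (1 : ℝ) else 0) * ((if r ∈ L then (1 : ℝ) else 0) * M r k) := by
    intro r
    simp [dsel, Matrix.mul_diagonal, Matrix.diagonal_mul, Matrix.transpose_apply]
  have hdiag : (diagPart (dsel K * Mᵀ * dsel L * M) *ᵥ x) k
      = (∑ r, (dsel K * Mᵀ * dsel L) k r * M r k) * x k := by
    simp [diagPart, Matrix.mulVec, dotProduct, Matrix.diagonal_apply, ite_mul, zero_mul,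
      Matrix.mul_apply]
  rw [Pi.sub_apply, Pi.smul_apply, smul_eq_mul, hdiag]
  simp only [Matrix.mulVec, dotProduct, hKL]
  rw [Finset.mul_sum, Finset.sum_mul, Finset.mul_sum, ← Finset.sum_sub_distrib]
  exact Finset.sum_congr rfl fun r _ => by ring

theorem stmt4 {m n s t : ℕ} (A : Matrix (Fin m) (Fin n) ℝ) (b : Fin m → ℝ)
    (p q : ℝ) (hp0 : 0 < p) (hp1 : p ≤ 1) (hq0 : 0 < q) (hq1 : q ≤ 1)
    (R : Fin s → Finset (Fin m)) (Cc : Fin t → Finset (Fin n))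
    (hR : IsPartition R) (hC : IsPartition Cc) (x : Fin n → ℝ) :
    ∑ δ : Fin m → Fin n → Bool, ∑ ε : Fin m → Bool,
      (wM p δ * wV q ε) •
        ((1 / (s * t : ℝ)) • ∑ i : Fin s, ∑ j : Fin t,
          ((dsel (Cc j) * (maskM δ A)ᵀ * dsel (R i)) *ᵥ
              ((1 / p ^ 2) • (maskM δ A *ᵥ x) - (1 / (p * q)) • maskV ε b)
            - ((1 - p) / p ^ 2) •
                (diagPart (dsel (Cc j) * (maskM δ A)ᵀ * dsel (R i) * maskM δ A) *ᵥ x)))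
      = (1 / (s * t : ℝ)) • (Aᵀ *ᵥ (A *ᵥ x - b)) := by
  have hp : p ≠ 0 := ne_of_gt hp0
  have hq : q ≠ 0 := ne_of_gt hq0
  have hpull : ∀ (w : ℝ) (v : Fin n → ℝ), w • ((1 / (s * t : ℝ)) • v)
      = (1 / (s * t : ℝ)) • (w • v) := fun w v => smul_comm w _ v
  simp only [hpull, ← Finset.smul_sum]
  congr 1
  funext k
  simp only [Finset.sum_apply, Pi.smul_apply, smul_eq_mul]
  -- the component of each block term
  have hcomp : ∀ (δ : Fin m → Fin n → Bool) (ε : Fin m → Bool) (i : Fin s) (j : Fin t),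
      ((dsel (Cc j) * (maskM δ A)ᵀ * dsel (R i)) *ᵥ
          ((1 / p ^ 2) • (maskM δ A *ᵥ x) - (1 / (p * q)) • maskV ε b)
        - ((1 - p) / p ^ 2) •
            (diagPart (dsel (Cc j) * (maskM δ A)ᵀ * dsel (R i) * maskM δ A) *ᵥ x)) k
      = (if k ∈ Cc j then (1 : ℝ) else 0) *
          ∑ r, (if r ∈ R i then (1 : ℝ) else 0) *
            (maskM δ A r k * ((1 / p ^ 2) * (∑ l, maskM δ A r l * x l)
                - (1 / (p * q)) * maskV ε b r)
              - ((1 - p) / p ^ 2) * (maskM δ A r k * maskM δ A r k) * x k) := by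
    intro δ ε i j
    rw [comp (Cc j) (R i) (maskM δ A) _ _ x k]
    congr 1
  simp only [hcomp]
  -- collapse the partition double sum
  have hS : ∀ (δ : Fin m → Fin n → Bool) (ε : Fin m → Bool),
      ∑ i : Fin s, ∑ j : Fin t, ((if k ∈ Cc j then (1 : ℝ) else 0) *
          ∑ r, (if r ∈ R i then (1 : ℝ) else 0) *
            (maskM δ A r k * ((1 / p ^ 2) * (∑ l, maskM δ A r l * x l)
                - (1 / (p * q)) * maskV ε b r)
              - ((1 - p) / p ^ 2) * (maskM δ A r k * maskM δ A r k) * x k))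
      = ∑ r, (maskM δ A r k * ((1 / p ^ 2) * (∑ l, maskM δ A r l * x l)
                - (1 / (p * q)) * maskV ε b r)
              - ((1 - p) / p ^ 2) * (maskM δ A r k * maskM δ A r k) * x k) := by
    intro δ ε
    set Φ : Fin m → ℝ := fun r =>
      maskM δ A r k * ((1 / p ^ 2) * (∑ l, maskM δ A r l * x l)
          - (1 / (p * q)) * maskV ε b r)
        - ((1 - p) / p ^ 2) * (maskM δ A r k * maskM δ A r k) * x k with hΦ
    rw [Finset.sum_comm]
    have h1 : ∀ j : Fin t, ∑ i : Fin s, ((if k ∈ Cc j then (1 : ℝ) else 0) *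
        ∑ r, (if r ∈ R i then (1 : ℝ) else 0) * Φ r)
        = (if k ∈ Cc j then (1 : ℝ) else 0) * ∑ r, Φ r := by
      intro j
      rw [← Finset.mul_sum]
      congr 1
      rw [Finset.sum_comm]
      refine Finset.sum_congr rfl fun r _ => ?_
      rw [← Finset.sum_mul, partition_sum R hR r, one_mul]
    simp only [hΦ] at h1 ⊢; simp only [h1]
    rw [← Finset.sum_mul, partition_sum Cc hC k, one_mul]
  simp only [hS]
  -- swap sums and apply the scalar expectation identity
  have hmul : ∀ (δ : Fin m → Fin n → Bool) (ε : Fin m → Bool),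
      (wM p δ * wV q ε) * (∑ r : Fin m,
        (maskM δ A r k * ((1 / p ^ 2) * (∑ l, maskM δ A r l * x l)
            - (1 / (p * q)) * maskV ε b r)
          - ((1 - p) / p ^ 2) * (maskM δ A r k * maskM δ A r k) * x k))
      = ∑ r : Fin m, (wM p δ * wV q ε) *
        (maskM δ A r k * ((1 / p ^ 2) * (∑ l, maskM δ A r l * x l)
            - (1 / (p * q)) * maskV ε b r)
          - ((1 - p) / p ^ 2) * (maskM δ A r k * maskM δ A r k) * x k) :=
    fun δ ε => Finset.mul_sum _ _ _
  simp only [hmul]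
  have h2 : ∀ δ : Fin m → Fin n → Bool, ∑ ε : Fin m → Bool, ∑ r : Fin m,
      (wM p δ * wV q ε) * (maskM δ A r k * ((1 / p ^ 2) * (∑ l, maskM δ A r l * x l)
          - (1 / (p * q)) * maskV ε b r)
        - ((1 - p) / p ^ 2) * (maskM δ A r k * maskM δ A r k) * x k)
      = ∑ r : Fin m, ∑ ε : Fin m → Bool,
      (wM p δ * wV q ε) * (maskM δ A r k * ((1 / p ^ 2) * (∑ l, maskM δ A r l * x l)
          - (1 / (p * q)) * maskV ε b r)
        - ((1 - p) / p ^ 2) * (maskM δ A r k * maskM δ A r k) * x k) :=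
    fun δ => Finset.sum_comm
  simp only [h2]
  rw [Finset.sum_comm]
  have hrhs : (Aᵀ *ᵥ (A *ᵥ x - b)) k = ∑ r, A r k * ((∑ l, A r l * x l) - b r) := by
    simp [Matrix.mulVec, dotProduct, Matrix.transpose_apply, Pi.sub_apply]
  rw [hrhs]
  exact Finset.sum_congr rfl fun r _ => Erow A b x p q hp hq r k
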